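/- (Sup-norm stability of the Legendre projection.) For every integer ℓ ≥ 0, every h > 0, and every continuous g : [0,h] → ℝ, the L²([0,h])-orthogonal projection P onto polynomials of degree at most ℓ satisfies sup_{x∈[0,h]} |(Pg)(x)| ≤ (ℓ+1)² sup_{x∈[0,h]} |g(x)|. -/

import Mathlib

open MeasureTheory Real Set

/-- The degree-`k` Legendre polynomial on `[-1,1]` (Rodrigues' formula), normalized
so that `∫_{-1}^1 p_k(x)^2 dx = 2/(2k+1)`. -/
noncomputable def legendreP (k : ℕ) : ℝ → ℝ :=
  fun x => (1 / ((2:ℝ) ^ k * (Nat.factorial k : ℝ))) *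
    iteratedDeriv k (fun y : ℝ => (y ^ 2 - 1) ^ k) x

/-- The `L²([0,h])`-orthogonal projection onto polynomials of degree at most `ℓ`,
written in terms of the translated and scaled Legendre polynomials. -/
noncomputable def legProj (ℓ : ℕ) (h : ℝ) (g : ℝ → ℝ) : ℝ → ℝ :=
  fun x => ∑ k ∈ Finset.range (ℓ + 1),
    ((2 * (k : ℝ) + 1) / h) * (∫ y in (0:ℝ)..h, g y * legendreP k (2 * y / h - 1)) *
      legendreP k (2 * x / h - 1)

noncomputable def Qpoly (k : ℕ) : Polynomial ℝ :=
  Polynomial.derivative^[k] (((Polynomial.X : Polynomial ℝ)^2 - 1)^k)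

open Polynomial in
theorem iteratedDeriv_polyEval (p : Polynomial ℝ) (n : ℕ) :
    iteratedDeriv n (fun x => p.eval x) = fun x => (derivative^[n] p).eval x := by
  induction n with
  | zero => simp [iteratedDeriv_zero]
  | succ n ih =>
    rw [iteratedDeriv_succ, ih, Function.iterate_succ_apply']
    funext x
    exact Polynomial.deriv _

theorem legendreP_eq (k : ℕ) (x : ℝ) :
    legendreP k x = (1 / ((2:ℝ) ^ k * (Nat.factorial k : ℝ))) * (Qpoly k).eval x := by
  have : (fun y : ℝ => (y ^ 2 - 1) ^ k)
      = fun y => ((((Polynomial.X : Polynomial ℝ)^2 - 1)^k)).eval y := by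
    funext y; simp
  rw [legendreP, this, iteratedDeriv_polyEval]; rfl

open Polynomial Finset in
theorem Qfactored (k : ℕ) :
    (((X:Polynomial ℝ)^2 - 1)^k) = (X - C 1)^k * (X + C 1)^k := by
  rw [← mul_pow]; congr 1
  have : (C 1 : Polynomial ℝ) = 1 := C_1
  rw [this]; ring

open Polynomial Finset in
theorem Qpoly_eval_one (k : ℕ) : (Qpoly k).eval 1 = 2^k * (Nat.factorial k : ℝ) := by
  rw [Qpoly, Qfactored, iterate_derivative_mul, eval_finset_sum]
  rw [Finset.sum_eq_single 0]
  · rw [Nat.choose_zero_right, one_smul, Nat.sub_zero, Function.iterate_zero_apply,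
      iterate_derivative_X_sub_pow_self, eval_mul, eval_natCast, eval_pow, eval_add,
      eval_X, eval_C]
    norm_num; ring
  · intro i hi hi0
    rw [iterate_derivative_X_sub_pow k (k-i) (1:ℝ), smul_mul_assoc, eval_smul, eval_smul,
      eval_mul, eval_pow, eval_sub, eval_X, eval_C, sub_self,
      zero_pow (by rcases Finset.mem_range.mp hi with h; omega : k - (k - i) ≠ 0)]
    simp
  · intro h; simp at h

open Polynomial Finset in
theorem Qpoly_eval_negone (k : ℕ) : (Qpoly k).eval (-1) = (-2)^k * (Nat.factorial k : ℝ) := by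
  have hadd : ((X:Polynomial ℝ) + C 1) = X - C (-1) := by simp [sub_neg_eq_add]
  rw [Qpoly, Qfactored, hadd, iterate_derivative_mul, eval_finset_sum]
  rw [Finset.sum_eq_single k]
  · rw [Nat.choose_self, Nat.sub_self, Function.iterate_zero_apply,
      iterate_derivative_X_sub_pow_self, one_smul, eval_mul, eval_natCast, eval_pow, eval_sub,
      eval_X, eval_C]
    norm_num
  · intro i hi hi0
    have hik : i < k := by rcases Finset.mem_range.mp hi with h; omega
    rw [iterate_derivative_X_sub_pow k i (-1:ℝ), mul_smul_comm, eval_smul, eval_smul,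
      eval_mul, eval_pow, eval_sub, eval_X, eval_C, sub_neg_eq_add, neg_add_cancel,
      zero_pow (by omega : k - i ≠ 0)]
    simp
  · intro h; simp at h

open Polynomial Finset in
theorem Qpoly_ode (m : ℕ) (x : ℝ) :
    (1 - x^2) * ((derivative (derivative (Qpoly (m+1)))).eval x)
      - 2*x*((derivative (Qpoly (m+1))).eval x)
      + ((m:ℝ)+1)*((m:ℝ)+2) * ((Qpoly (m+1)).eval x) = 0 := by
  set u : Polynomial ℝ := ((X:Polynomial ℝ)^2 - 1)^(m+1) with hu
  have hQ : Qpoly (m+1) = derivative^[m+1] u := rfl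
  have hQ' : derivative (Qpoly (m+1)) = derivative^[m+2] u := by
    rw [hQ]; exact (Function.iterate_succ_apply' derivative (m+1) u).symm
  have hQ'' : derivative (derivative (Qpoly (m+1))) = derivative^[m+3] u := by
    rw [hQ']; exact (Function.iterate_succ_apply' derivative (m+2) u).symm
  have hd1 : derivative ((X:Polynomial ℝ)^2 - 1) = C 2 * X := by
    rw [derivative_sub, derivative_one, derivative_X_pow]; norm_num
  have hd2 : derivative^[2] ((X:Polynomial ℝ)^2 - 1) = C 2 := by
    rw [show (2:ℕ) = 1 + 1 from rfl, Function.iterate_succ_apply, Function.iterate_one, hd1,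
      derivative_C_mul, derivative_X, mul_one]
  have hnd : ((X:Polynomial ℝ)^2 - 1).natDegree = 2 := by
    rw [show ((X:Polynomial ℝ)^2 - 1) = X^2 - C 1 by rw [C_1]]
    exact natDegree_X_pow_sub_C
  have hd0 : ∀ i, 3 ≤ i → derivative^[i] ((X:Polynomial ℝ)^2 - 1) = 0 := fun i hi =>
    iterate_derivative_eq_zero (by omega)
  have hbase : derivative u * ((X:Polynomial ℝ)^2 - 1) = C (2*((m:ℝ)+1)) * (u * X) := by
    rw [hu, derivative_pow, hd1, Nat.add_sub_cancel]
    have h2 : (C ((↑(m+1)):ℝ) : Polynomial ℝ) = C ((m:ℝ)) + 1 := by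
      push_cast; rw [C_add, C_1]
    have h3 : (C (2*((m:ℝ)+1)) : Polynomial ℝ) = C 2 * (C ((m:ℝ)) + 1) := by
      rw [← C_1, ← C_add, ← C_mul]
    rw [h2, h3]
    ring
  have key := congrArg (fun p : Polynomial ℝ => p.eval x)
    (congrArg (fun p : Polynomial ℝ => derivative^[m+2] p) hbase)
  simp only [iterate_derivative_C_mul] at key
  rw [iterate_derivative_mul, iterate_derivative_mul] at key
  rw [show (m+2).succ = m+3 from rfl] at key
  rw [← Finset.sum_subset (Finset.range_subset_range.mpr (by omega : 3 ≤ m+3))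
      (fun i _ hi => by
        rw [hd0 i (by simpa using hi), mul_zero, smul_zero])] at key
  rw [← Finset.sum_subset (Finset.range_subset_range.mpr (by omega : 2 ≤ m+3))
      (fun i _ hi => by
        rw [iterate_derivative_X (by simpa using hi), mul_zero, smul_zero])] at key
  simp only [Finset.sum_range_succ, Finset.sum_range_zero, zero_add,
    Function.iterate_zero_apply, Nat.sub_zero, Nat.choose_zero_right, one_smul,
    Nat.choose_one_right, hd1, hd2, Function.iterate_one, derivative_X] at key
  have e0 : derivative^[m+2] (derivative u) = derivative^[m+3] u :=
    (Function.iterate_succ_apply _ _ _).symm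
  have e1 : derivative^[m+2-1] (derivative u) = derivative^[m+2] u := by
    rw [show m+2-1 = m+1 from rfl]; exact (Function.iterate_succ_apply _ _ _).symm
  have e2 : derivative^[m+2-2] (derivative u) = derivative^[m+1] u := by
    rw [show m+2-2 = m from rfl]; exact (Function.iterate_succ_apply _ _ _).symm
  rw [e0, e1, e2] at key
  simp only [eval_add, eval_mul, eval_smul, eval_sub, eval_pow, eval_X, eval_one, eval_C,
    eval_natCast, smul_eq_mul, mul_one, nsmul_eq_mul] at key
  rw [hQ'', hQ', hQ]
  have hc2 : ((((m+2).choose 2 : ℕ)) : ℝ) = ((m:ℝ)+2)*((m:ℝ)+1)/2 := by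
    rw [Nat.cast_choose_two]; push_cast; ring
  rw [hc2] at key
  push_cast at key ⊢
  linarith [key]

open Polynomial in
theorem Qpoly_sq_le (m : ℕ) {x : ℝ} (hx : x ∈ Set.Icc (-1:ℝ) 1) :
    ((Qpoly (m+1)).eval x)^2 ≤ (2^(m+1) * (Nat.factorial (m+1) : ℝ))^2 := by
  have hc : (0:ℝ) < ((m:ℝ)+1)*((m:ℝ)+2) := by positivity
  set c : ℝ := ((m:ℝ)+1)*((m:ℝ)+2) with hcdef
  set Q : Polynomial ℝ := Qpoly (m+1) with hQdef
  set Fp : Polynomial ℝ := C c * Q^2 + (1 - X^2) * (derivative Q)^2 with hF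
  set B : ℝ := 2^(m+1) * (Nat.factorial (m+1) : ℝ) with hBdef
  have hBpos : 0 < B := by positivity
  have hderiv : ∀ y : ℝ, (derivative Fp).eval y = 2*y*((derivative Q).eval y)^2 := by
    intro y
    have hode := Qpoly_ode m y
    rw [← hQdef, ← hcdef] at hode
    simp only [hF, derivative_add, derivative_C_mul, derivative_mul, derivative_pow,
      derivative_sub, derivative_one, derivative_X_pow, derivative_C, derivative_X, pow_one,
      eval_add, eval_mul, eval_sub, eval_pow, eval_X, eval_one, eval_C, eval_natCast,
      eval_zero, zero_mul, mul_one, mul_zero, add_zero, zero_add]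
    push_cast
    linear_combination (2*((derivative Q).eval y)) * hode
  have hdrv : ∀ y : ℝ, deriv (fun t => Fp.eval t) y = (derivative Fp).eval y :=
    fun y => Polynomial.deriv (p := Fp)
  have hdiff : ∀ s : Set ℝ, DifferentiableOn ℝ (fun t => Fp.eval t) s :=
    fun s => (Polynomial.differentiable Fp).differentiableOn
  have hmono : MonotoneOn (fun t => Fp.eval t) (Set.Icc (0:ℝ) 1) := by
    apply monotoneOn_of_deriv_nonneg (convex_Icc 0 1) Fp.continuous.continuousOn
      ((hdiff _))
    intro y hy
    rw [interior_Icc] at hy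
    rw [hdrv, hderiv]
    have : 0 ≤ y := le_of_lt hy.1
    positivity
  have hanti : AntitoneOn (fun t => Fp.eval t) (Set.Icc (-1:ℝ) 0) := by
    apply antitoneOn_of_deriv_nonpos (convex_Icc (-1) 0) Fp.continuous.continuousOn
      ((hdiff _))
    intro y hy
    rw [interior_Icc] at hy
    rw [hdrv, hderiv]
    have h1 : y ≤ 0 := le_of_lt hy.2
    nlinarith [sq_nonneg ((derivative Q).eval y)]
  have hF1 : Fp.eval 1 = c * B^2 := by
    simp only [hF, eval_add, eval_mul, eval_sub, eval_pow, eval_X, eval_one, eval_C]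
    rw [← hQdef] at *
    rw [hQdef, Qpoly_eval_one, ← hBdef]
    ring
  have hFm1 : Fp.eval (-1) = c * B^2 := by
    simp only [hF, eval_add, eval_mul, eval_sub, eval_pow, eval_X, eval_one, eval_C]
    rw [hQdef, Qpoly_eval_negone]
    have h4 : (((-2:ℝ))^(m+1) * (Nat.factorial (m+1) : ℝ))^2 = B^2 := by
      rw [hBdef, mul_pow, mul_pow, ← pow_mul, ← pow_mul, mul_comm (m+1) 2, pow_mul, pow_mul]
      norm_num
    nlinarith [h4]
  have hle : Fp.eval x ≤ c * B^2 := by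
    rcases le_total 0 x with h0 | h0
    · rw [← hF1]
      exact hmono ⟨h0, hx.2⟩ ⟨zero_le_one, le_rfl⟩ hx.2
    · rw [← hFm1]
      exact hanti ⟨le_rfl, by norm_num⟩ ⟨hx.1, h0⟩ hx.1
  have hlow : c * ((Q).eval x)^2 ≤ Fp.eval x := by
    simp only [hF, eval_add, eval_mul, eval_sub, eval_pow, eval_X, eval_one, eval_C]
    nlinarith [sq_nonneg ((derivative Q).eval x), hx.1, hx.2,
      mul_nonneg (sub_nonneg.mpr (by nlinarith [hx.1, hx.2] : x^2 ≤ 1))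
        (sq_nonneg ((derivative Q).eval x))]
  have := hlow.trans hle
  nlinarith [this, hc]

theorem legendreP_abs_le (k : ℕ) {x : ℝ} (hx : x ∈ Set.Icc (-1:ℝ) 1) :
    |legendreP k x| ≤ 1 := by
  cases k with
  | zero => simp [legendreP, iteratedDeriv_zero]
  | succ m =>
    rw [legendreP_eq]
    set B : ℝ := 2^(m+1) * (Nat.factorial (m+1) : ℝ) with hBdef
    have hBpos : 0 < B := by positivity
    have hsq := Qpoly_sq_le m hx
    set a : ℝ := (Qpoly (m+1)).eval x
    have habs : |a| ≤ B := by nlinarith [abs_nonneg a, sq_abs a]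
    rw [abs_mul, abs_of_pos (by positivity : (0:ℝ) < 1 / B)]
    calc 1 / B * |a| ≤ 1 / B * B :=
          mul_le_mul_of_nonneg_left habs (by positivity)
      _ = 1 := by field_simp

theorem sum_odds (n : ℕ) : ∑ k ∈ Finset.range n, (2*(k:ℝ)+1) = (n:ℝ)^2 := by
  induction n with
  | zero => simp
  | succ n ih => rw [Finset.sum_range_succ, ih]; push_cast; ring

/-- (Sup-norm stability of the Legendre projection.) For every
`ℓ ≥ 0`, `h > 0` and continuous `g : [0,h] → ℝ` with `sup_{[0,h]} |g| ≤ M`, one has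
`sup_{x ∈ [0,h]} |(Pg)(x)| ≤ (ℓ+1)² M`. -/
theorem legProj_sup_norm_stability
    (ℓ : ℕ) (h : ℝ) (hh : 0 < h) (g : ℝ → ℝ)
    (hg : ContinuousOn g (Set.Icc 0 h))
    (M : ℝ) (hM : ∀ y ∈ Set.Icc (0:ℝ) h, |g y| ≤ M) :
    ∀ x ∈ Set.Icc (0:ℝ) h, |legProj ℓ h g x| ≤ ((ℓ : ℝ) + 1) ^ 2 * M := by
  intro x hx
  have hM0 : 0 ≤ M := (abs_nonneg _).trans (hM 0 ⟨le_rfl, hh.le⟩)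
  have hmap : ∀ y : ℝ, y ∈ Set.Icc (0:ℝ) h → (2 * y / h - 1) ∈ Set.Icc (-1:ℝ) 1 := by
    intro y hy
    constructor
    · have h1 : 0 ≤ 2 * y / h := div_nonneg (by nlinarith [hy.1]) hh.le
      linarith
    · rw [sub_le_iff_le_add, div_le_iff₀ hh]
      nlinarith [hy.2]
  have hI : ∀ k : ℕ, |∫ y in (0:ℝ)..h, g y * legendreP k (2*y/h-1)| ≤ M * h := by
    intro k
    have hb : ∀ y ∈ Set.uIoc (0:ℝ) h, ‖g y * legendreP k (2*y/h-1)‖ ≤ M := by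
      intro y hy
      rw [Set.uIoc_of_le hh.le] at hy
      have hyIcc : y ∈ Set.Icc (0:ℝ) h := ⟨hy.1.le, hy.2⟩
      rw [Real.norm_eq_abs, abs_mul]
      calc |g y| * |legendreP k (2*y/h-1)| ≤ M * 1 :=
            mul_le_mul (hM y hyIcc) (legendreP_abs_le k (hmap y hyIcc)) (abs_nonneg _) hM0
        _ = M := mul_one M
    have hest := intervalIntegral.norm_integral_le_of_norm_le_const hb
    rw [Real.norm_eq_abs] at hest
    calc |∫ y in (0:ℝ)..h, g y * legendreP k (2*y/h-1)| ≤ M * |h - 0| := hest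
      _ = M * h := by rw [sub_zero, abs_of_pos hh]
  have hxmem := hmap x hx
  calc |legProj ℓ h g x|
      ≤ ∑ k ∈ Finset.range (ℓ+1),
          |((2 * (k : ℝ) + 1) / h) * (∫ y in (0:ℝ)..h, g y * legendreP k (2 * y / h - 1)) *
            legendreP k (2 * x / h - 1)| := by
        rw [legProj]; exact Finset.abs_sum_le_sum_abs _ _
    _ ≤ ∑ k ∈ Finset.range (ℓ+1), (2*(k:ℝ)+1) * M := by
        apply Finset.sum_le_sum
        intro k _
        rw [abs_mul, abs_mul, abs_of_pos (by positivity : (0:ℝ) < (2*(k:ℝ)+1)/h)]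
        calc (2*(k:ℝ)+1)/h * |∫ y in (0:ℝ)..h, g y * legendreP k (2 * y / h - 1)|
              * |legendreP k (2 * x / h - 1)|
            ≤ (2*(k:ℝ)+1)/h * (M*h) * 1 := by
              apply mul_le_mul
                (mul_le_mul_of_nonneg_left (hI k) (by positivity))
                (legendreP_abs_le k hxmem) (abs_nonneg _) (by positivity)
          _ = (2*(k:ℝ)+1) * M := by field_simp
    _ = ((ℓ:ℝ)+1)^2 * M := by
        rw [← Finset.sum_mul, sum_odds]
        push_cast; ring
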